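/- Let X = ⨆_λ G_λ be an MGR, Y an X-set, w = ⟨υ⟩⟨x₁⟩⋯⟨x_k⟩ a generator of C_n(X)_Y, and x ∈ X. Then ∂(w * x) = ∂(w) * x, where w * x = ⟨υ⋆x⟩⟨x₁*x⟩⋯⟨x_k*x⟩ (each block acted on entrywise by *x). -/

import Mathlib

/-- A multiple group rack `X = ⨆_{λ∈Λ} G_λ`, encoded by its underlying set
`X`, the fiber projection `p : X → Λ`, a fiberwise group structure
(`mul`, `one`, `inv`, with axioms imposed only within a fiber) and the rack
operation `op`. -/
structure MGRData (X : Type*) (Λ : Type*) where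
  p : X → Λ
  mul : X → X → X
  one : Λ → X
  inv : X → X
  op : X → X → X
  p_one : ∀ l, p (one l) = l
  p_mul : ∀ x y, p x = p y → p (mul x y) = p x
  p_inv : ∀ x, p (inv x) = p x
  mul_assoc : ∀ x y z, p x = p y → p y = p z →
    mul (mul x y) z = mul x (mul y z)
  mul_one : ∀ x, mul x (one (p x)) = x
  one_mul : ∀ x, mul (one (p x)) x = x
  mul_inv : ∀ x, mul x (inv x) = one (p x)
  op_mulr : ∀ x y₁ y₂, p y₁ = p y₂ → op x (mul y₁ y₂) = op (op x y₁) y₂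
  op_oner : ∀ x l, op x (one l) = x
  dist : ∀ x y z, op (op x y) z = op (op x z) (op y z)
  p_op : ∀ x₁ x₂ y, p x₁ = p x₂ → p (op x₁ y) = p (op x₂ y)
  mul_op : ∀ x₁ x₂ y, p x₁ = p x₂ → op (mul x₁ x₂) y = mul (op x₁ y) (op x₂ y)

/-- An `X`-set for an MGR `X`. -/
structure MGRSet {X Λ : Type*} (M : MGRData X Λ) (Y : Type*) where
  act : Y → X → Y
  act_one : ∀ (υ : Y) (l : Λ), act υ (M.one l) = υ
  act_mul : ∀ (υ : Y) (x₁ x₂ : X), M.p x₁ = M.p x₂ →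
    act υ (M.mul x₁ x₂) = act (act υ x₁) x₂
  act_op : ∀ (υ : Y) (x y : X), act (act υ x) y = act (act υ y) (M.op x y)

section
variable {X Λ Y : Type*} (M : MGRData X Λ) (S : MGRSet M Y) (d : X)

/-- A generator `⟨υ⟩⟨x₁⟩⋯⟨x_k⟩` of the MGR chain complex, encoded as a point
of `Y` together with a list of blocks (lists) of elements of `X`; empty blocks
`⟨⟩` are deleted. -/
noncomputable def mgen (υ : Y) (L : List (List X)) : (Y × List (List X)) →₀ ℤ :=
  Finsupp.single (υ, L.filter (fun b => !b.isEmpty)) 1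

/-- The contribution `±⟨υ⟩⟨x₁⟩⋯∂̃⟨x_i⟩⋯⟨x_k⟩` of one block: `∂̃⟨x⟩ =
`*x₁⟨x⁰⟩ + Σ_{i=1}^m (−1)^i ⟨x^i⟩`, where `*x₁` acts by `op`/`act` on
everything to its left. `d` is a default element used only out of range. -/
noncomputable def blockBdry (υ : Y) (pre : List (List X)) (xs : List X)
    (post : List (List X)) : (Y × List (List X)) →₀ ℤ :=
  if xs.isEmpty then 0 else
    mgen (S.act υ (xs.headD d))
        (pre.map (List.map (fun z => M.op z (xs.headD d))) ++ (xs.tail :: post))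
      + ∑ j ∈ Finset.range xs.length, ((-1 : ℤ) ^ (j + 1)) •
          mgen υ (pre ++
            ((if j + 1 < xs.length then
                xs.take j ++ [M.mul (xs.getD j d) (xs.getD (j + 1) d)]
                  ++ xs.drop (j + 2)
              else xs.dropLast) :: post))

/-- The boundary `∂` of a generator. -/
noncomputable def mbdryGen (υ : Y) (L : List (List X)) : (Y × List (List X)) →₀ ℤ :=
  ∑ i ∈ Finset.range L.length,
    ((-1 : ℤ) ^ (((L.take i).map List.length).sum)) •
      blockBdry M S d υ (L.take i) (L.getD i []) (L.drop (i + 1))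

/-- The boundary homomorphism of the MGR chain complex, extended linearly. -/
noncomputable def mbdry (f : (Y × List (List X)) →₀ ℤ) : (Y × List (List X)) →₀ ℤ :=
  f.sum fun q c => c • mbdryGen M S d q.1 q.2

/-- A valid generator: every block is non-empty and lies in a single fiber. -/
def validL (L : List (List X)) : Prop :=
  ∀ b ∈ L, b ≠ [] ∧ ∀ x ∈ b, ∀ y ∈ b, M.p x = M.p y

end


section
variable {X Λ Y : Type*} (M : MGRData X Λ) (S : MGRSet M Y)

/-- The action `w ↦ w * x` on chains, sending a generator
`⟨υ⟩⟨x₁⟩⋯⟨x_k⟩` to `⟨υ⋆x⟩⟨x₁*x⟩⋯⟨x_k*x⟩`. -/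
noncomputable def starMap (x : X) :
    ((Y × List (List X)) →₀ ℤ) → ((Y × List (List X)) →₀ ℤ) :=
  Finsupp.mapDomain
    (fun q => (S.act q.1 x, q.2.map (List.map (fun z => M.op z x))))

end


section helpers
variable {X Λ Y : Type*} (M : MGRData X Λ) (S : MGRSet M Y) (d : X) (x : X)

lemma starMap_sum {ι : Type*} (s : Finset ι) (g : ι → ((Y × List (List X)) →₀ ℤ)) :
    starMap M S x (∑ i ∈ s, g i) = ∑ i ∈ s, starMap M S x (g i) := by
  classical
  induction s using Finset.induction_on with
  | empty => simp [starMap]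
  | @insert a s h ih =>
      rw [Finset.sum_insert h, Finset.sum_insert h, ← ih]
      unfold starMap
      exact Finsupp.mapDomain_add

lemma starMap_smul (c : ℤ) (f : (Y × List (List X)) →₀ ℤ) :
    starMap M S x (c • f) = c • starMap M S x f := by
  unfold starMap
  exact Finsupp.mapDomain_smul c f

lemma starMap_add (f g : (Y × List (List X)) →₀ ℤ) :
    starMap M S x (f + g) = starMap M S x f + starMap M S x g := by
  unfold starMap; exact Finsupp.mapDomain_add

lemma starMap_mgen (υ : Y) (L : List (List X)) :
    starMap M S x (mgen υ L) =
      mgen (S.act υ x) (L.map (List.map (fun z => M.op z x))) := by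
  unfold starMap mgen
  rw [Finsupp.mapDomain_single]
  have : (L.map (List.map (fun z => M.op z x))).filter (fun b => !b.isEmpty)
      = (L.filter (fun b => !b.isEmpty)).map (List.map (fun z => M.op z x)) := by
    rw [List.filter_map]
    have : List.filter ((fun b => !b.isEmpty) ∘ List.map (fun z => M.op z x)) L
        = List.filter (fun b => !b.isEmpty) L :=
      List.filter_congr fun b _ => by cases b <;> simp [Function.comp]
    rw [this]
  rw [this]

lemma getD_map (f : X → X) (l : List X) (j : ℕ) (hj : j < l.length) :
    (l.map f).getD j d = f (l.getD j d) := by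
  rw [List.getD_eq_getElem _ _ (by simpa using hj), List.getD_eq_getElem _ _ hj]
  simp

lemma getD_mem (l : List X) (j : ℕ) (hj : j < l.length) : l.getD j d ∈ l := by
  rw [List.getD_eq_getElem _ _ hj]; exact List.getElem_mem hj

lemma block_map (xs : List X) (j : ℕ) (hj : j < xs.length)
    (hfib : ∀ a ∈ xs, ∀ b ∈ xs, M.p a = M.p b) :
    (if j + 1 < (xs.map (fun z => M.op z x)).length then
        (xs.map (fun z => M.op z x)).take j ++
          [M.mul ((xs.map (fun z => M.op z x)).getD j d)
            ((xs.map (fun z => M.op z x)).getD (j + 1) d)] ++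
          (xs.map (fun z => M.op z x)).drop (j + 2)
      else (xs.map (fun z => M.op z x)).dropLast)
    = (if j + 1 < xs.length then
        xs.take j ++ [M.mul (xs.getD j d) (xs.getD (j + 1) d)] ++ xs.drop (j + 2)
      else xs.dropLast).map (fun z => M.op z x) := by
  simp only [List.length_map]
  split
  · next h =>
    rw [getD_map d _ _ _ hj, getD_map d _ _ _ h,
      ← M.mul_op _ _ _ (hfib _ (getD_mem d xs j hj) _ (getD_mem d xs (j+1) h))]
    simp [List.map_take, List.map_drop]
  · exact List.map_dropLast.symm

lemma blockBdry_star (υ : Y) (pre : List (List X)) (xs : List X)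
    (post : List (List X)) (hfib : ∀ a ∈ xs, ∀ b ∈ xs, M.p a = M.p b) :
    blockBdry M S d (S.act υ x) (pre.map (List.map (fun z => M.op z x)))
        (xs.map (fun z => M.op z x)) (post.map (List.map (fun z => M.op z x))) =
    starMap M S x (blockBdry M S d υ pre xs post) := by
  cases xs with
  | nil => simp [blockBdry, starMap]
  | cons a t =>
    unfold blockBdry
    simp only [List.map_cons, List.isEmpty_cons, Bool.false_eq_true, if_false,
      List.headD_cons, List.tail_cons, List.length_cons, List.length_map]
    rw [starMap_add, starMap_sum, starMap_mgen]
    have hact : S.act (S.act υ a) x = S.act (S.act υ x) (M.op a x) := S.act_op υ a x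
    congr 1
    · congr 1
      · exact hact.symm
      · have hfun : ((fun z => M.op z (M.op a x)) ∘ (fun z => M.op z x))
            = ((fun z => M.op z x) ∘ (fun z => M.op z a)) := by
          funext z
          exact (M.dist z a x).symm
        simp only [List.map_append, List.map_cons, List.map_map, List.map_comp_map, hfun]
    · refine Finset.sum_congr rfl fun j hj => ?_
      have hj' : j < (a :: t).length := by
        simpa using Finset.mem_range.mp hj
      rw [starMap_smul, starMap_mgen]
      congr 1
      have := block_map M d x (a :: t) j hj' hfib
      simp only [List.map_cons, List.length_cons, List.length_map] at this ⊢
      rw [this]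
      simp [List.map_append]
end helpers

/-- For a generator `w = ⟨υ⟩⟨x₁⟩⋯⟨x_k⟩` and `x ∈ X`,
`∂(w * x) = ∂(w) * x`. -/
theorem stmt_13 (X Λ Y : Type*) (M : MGRData X Λ) (S : MGRSet M Y) (d : X)
    (υ : Y) (L : List (List X)) (hL : validL M L) (x : X) :
    mbdryGen M S d (S.act υ x) (L.map (List.map (fun z => M.op z x))) =
    starMap M S x (mbdryGen M S d υ L) := by
  unfold mbdryGen
  rw [starMap_sum, List.length_map]
  refine Finset.sum_congr rfl fun i hi => ?_
  have hi' : i < L.length := Finset.mem_range.mp hi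
  rw [starMap_smul]
  have hsign : (((L.map (List.map (fun z => M.op z x))).take i).map List.length).sum
      = ((L.take i).map List.length).sum := by
    rw [← List.map_take]
    simp [List.map_map, Function.comp_def]
  rw [hsign]
  congr 1
  have hgetD : (L.map (List.map (fun z => M.op z x))).getD i []
      = (L.getD i []).map (fun z => M.op z x) := by
    rw [List.getD_eq_getElem _ _ (by simpa using hi'), List.getD_eq_getElem _ _ hi']
    simp
  rw [← List.map_take, ← List.map_drop, hgetD]
  exact blockBdry_star M S d x υ (L.take i) (L.getD i []) (L.drop (i+1))
    (hL _ (getD_mem _ L i hi')).2
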